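/- arXiv:2204.03052 — 2 statements merged into one kernel-verified Lean document; each statement's English description precedes it below -/
import Mathlib

section
/- The map f(x) = 2x/(1+|x|²) is an isometry from the Finsler–Poincaré disk (D, F_P) to the Funk model (D, F_F): for all x ∈ D and v ∈ ℝ², F_P(x,v) = F_F(f(x), Df_x(v)). -/
noncomputable section

/-- The Euclidean plane. -/
abbrev E2 := EuclideanSpace ℝ (Fin 2)

/-- The open unit disk. -/
def Dset : Set E2 := {x | ‖x‖ < 1}

/-- The upper half plane. -/
def Hset : Set E2 := {x | x 1 > 0}

/-- f(x) = 2x/(1+|x|²). -/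
def fPF (x : E2) : E2 := (2 / (1 + ‖x‖ ^ 2)) • x

/-- The Funk metric on the disk. -/
def FF (x v : E2) : ℝ :=
  (Real.sqrt ((1 - ‖x‖ ^ 2) * ‖v‖ ^ 2 + (inner ℝ x v : ℝ) ^ 2) + (inner ℝ x v : ℝ)) / (1 - ‖x‖ ^ 2)

/-- The Finsler-Poincaré metric on the disk. -/
def FP (x v : E2) : ℝ := 2 * ‖v‖ / (1 - ‖x‖ ^ 2) + 4 * (inner ℝ x v : ℝ) / (1 - ‖x‖ ^ 4)

lemma hasFDerivAt_normSq (x : E2) :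
    HasFDerivAt (fun y : E2 => ‖y‖ ^ 2) ((2 : ℝ) • (innerSL ℝ x)) x := by
  have h := (hasFDerivAt_id x).inner ℝ (hasFDerivAt_id x)
  simp only [id_eq] at h
  have heq : (fun t : E2 => (inner ℝ t t : ℝ)) = fun y : E2 => ‖y‖ ^ 2 := by
    funext y; exact real_inner_self_eq_norm_sq y
  rw [heq] at h
  refine h.congr_fderiv ?_
  ext w
  simp [real_inner_comm, two_smul]

lemma fPF_hasFDerivAt (x : E2) :
    HasFDerivAt fPF
      ((2 / (1 + ‖x‖ ^ 2)) • ContinuousLinearMap.id ℝ E2 +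
        ((-(2 / (1 + ‖x‖ ^ 2) ^ 2)) • ((2 : ℝ) • (innerSL ℝ x))).smulRight x) x := by
  have hs : (1 + ‖x‖ ^ 2) ≠ 0 := by positivity
  have hg : HasDerivAt (fun t : ℝ => 2 / (1 + t)) (-(2 / (1 + ‖x‖ ^ 2) ^ 2)) (‖x‖ ^ 2) := by
    have h1 : HasDerivAt (fun t : ℝ => 1 + t) 1 (‖x‖ ^ 2) :=
      (hasDerivAt_id _).const_add 1
    have := (hasDerivAt_const (‖x‖ ^ 2) (2 : ℝ)).div h1 hs
    refine this.congr_deriv ?_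
    ring
  have hc : HasFDerivAt (fun y : E2 => 2 / (1 + ‖y‖ ^ 2))
      ((-(2 / (1 + ‖x‖ ^ 2) ^ 2)) • ((2 : ℝ) • (innerSL ℝ x))) x :=
    by have := hg.comp_hasFDerivAt x (hasFDerivAt_normSq x); exact this
  exact hc.smul (hasFDerivAt_id x)

lemma fPF_fderiv_apply (x v : E2) :
    fderiv ℝ fPF x v =
      (2 / (1 + ‖x‖ ^ 2)) • v - ((4 * (inner ℝ x v : ℝ)) / (1 + ‖x‖ ^ 2) ^ 2) • x := by
  rw [(fPF_hasFDerivAt x).fderiv]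
  simp only [ContinuousLinearMap.add_apply, ContinuousLinearMap.smul_apply,
    ContinuousLinearMap.id_apply, ContinuousLinearMap.smulRight_apply, innerSL_apply_apply,
    smul_smul, sub_eq_add_neg, ← neg_smul]
  match_scalars <;> (simp only [smul_eq_mul]; try ring)

theorem fPF_isometry (x : E2) (hx : x ∈ Dset) (v : E2) :
    FP x v = FF (fPF x) (fderiv ℝ fPF x v) := by
  have hx1 : ‖x‖ < 1 := hx
  have hx0 : (0 : ℝ) ≤ ‖x‖ := norm_nonneg x
  have hr1 : ‖x‖ ^ 2 < 1 := by nlinarith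
  have hs : (1 + ‖x‖ ^ 2) ≠ 0 := by positivity
  have ht0 : (0 : ℝ) < 1 - ‖x‖ ^ 2 := by linarith
  have ht : (1 - ‖x‖ ^ 2) ≠ 0 := ne_of_gt ht0
  have hnfx : ‖fPF x‖ ^ 2 = 4 * ‖x‖ ^ 2 / (1 + ‖x‖ ^ 2) ^ 2 := by
    rw [fPF, norm_smul, mul_pow, Real.norm_eq_abs, sq_abs, div_pow]
    ring
  have honefx : 1 - ‖fPF x‖ ^ 2 = (1 - ‖x‖ ^ 2) ^ 2 / (1 + ‖x‖ ^ 2) ^ 2 := by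
    rw [hnfx]; field_simp; ring
  have hw : fderiv ℝ fPF x v
      = (2 / (1 + ‖x‖ ^ 2)) • v - ((4 * (inner ℝ x v : ℝ)) / (1 + ‖x‖ ^ 2) ^ 2) • x :=
    fPF_fderiv_apply x v
  have hinner : (inner ℝ (fPF x) (fderiv ℝ fPF x v) : ℝ)
      = 4 * (1 - ‖x‖ ^ 2) * (inner ℝ x v : ℝ) / (1 + ‖x‖ ^ 2) ^ 3 := by
    rw [fPF, hw]
    simp only [inner_smul_left, inner_sub_right, inner_smul_right, RCLike.conj_to_real,
      real_inner_self_eq_norm_sq]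
    field_simp
    ring
  have hnw : ‖fderiv ℝ fPF x v‖ ^ 2
      = 4 * ‖v‖ ^ 2 / (1 + ‖x‖ ^ 2) ^ 2
        - 16 * (inner ℝ x v : ℝ) ^ 2 / (1 + ‖x‖ ^ 2) ^ 4 := by
    rw [← real_inner_self_eq_norm_sq, hw]
    simp only [inner_sub_left, inner_sub_right, inner_smul_left, inner_smul_right,
      RCLike.conj_to_real, real_inner_self_eq_norm_sq x, real_inner_self_eq_norm_sq v,
      real_inner_comm v x]
    field_simp
    ring
  have harg : (1 - ‖fPF x‖ ^ 2) * ‖fderiv ℝ fPF x v‖ ^ 2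
        + (inner ℝ (fPF x) (fderiv ℝ fPF x v) : ℝ) ^ 2
      = (2 * (1 - ‖x‖ ^ 2) * ‖v‖ / (1 + ‖x‖ ^ 2) ^ 2) ^ 2 := by
    rw [honefx, hnw, hinner]
    field_simp
    ring
  have hsqrt : Real.sqrt ((1 - ‖fPF x‖ ^ 2) * ‖fderiv ℝ fPF x v‖ ^ 2
        + (inner ℝ (fPF x) (fderiv ℝ fPF x v) : ℝ) ^ 2)
      = 2 * (1 - ‖x‖ ^ 2) * ‖v‖ / (1 + ‖x‖ ^ 2) ^ 2 := by
    rw [harg, Real.sqrt_sq (by positivity)]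
  unfold FF FP
  rw [hsqrt, hinner, honefx,
    show (1 : ℝ) - ‖x‖ ^ 4 = (1 - ‖x‖ ^ 2) * (1 + ‖x‖ ^ 2) by ring]
  field_simp
end
end

section
/- The pullback of the Klein term under f equals the hyperbolic Poincaré term: for x ∈ D, v ∈ ℝ², with f(x) = 2x/(1+|x|²), one has √((1-|f(x)|²)|Df_x(v)|² + ⟨f(x),Df_x(v)⟩²)/(1-|f(x)|²) = 2|v|/(1-|x|²). -/
noncomputable section

lemma fPF_deriv (x : E2) (v : E2) :
    fderiv ℝ fPF x v = (2 / (1 + ‖x‖ ^ 2)) • v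
      + (-(4 * (inner ℝ x v : ℝ)) / (1 + ‖x‖ ^ 2) ^ 2) • x := by
  have hs : (0:ℝ) < 1 + ‖x‖ ^ 2 := by positivity
  have hn : HasFDerivAt (fun y : E2 => 1 + ‖y‖ ^ 2) (2 • (innerSL ℝ x)) x := by
    have := (hasFDerivAt_const (1:ℝ) x).add (hasFDerivAt_id x).norm_sq
    simpa using (hasFDerivAt_id x).norm_sq
  have hg : HasDerivAt (fun u : ℝ => 2 / u) (-(2) / (1 + ‖x‖ ^ 2) ^ 2) (1 + ‖x‖ ^ 2) := by
    simpa [div_eq_mul_inv, neg_div] using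
      ((hasDerivAt_inv hs.ne').const_mul (2:ℝ))
  have hc : HasFDerivAt (fun y : E2 => 2 / (1 + ‖y‖ ^ 2))
      ((-(2) / (1 + ‖x‖ ^ 2) ^ 2) • (2 • (innerSL ℝ x))) x :=
    hg.comp_hasFDerivAt x hn
  have hf : HasFDerivAt fPF
      ((2 / (1 + ‖x‖ ^ 2)) • ContinuousLinearMap.id ℝ E2
        + ((-(2) / (1 + ‖x‖ ^ 2) ^ 2) • (2 • (innerSL ℝ x))).smulRight x) x := by
    exact hc.smul (hasFDerivAt_id x)
  rw [hf.fderiv]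
  simp [ContinuousLinearMap.smul_apply, smul_smul]
  ring_nf

theorem pullback_klein_term (x : E2) (hx : x ∈ Dset) (v : E2) :
    Real.sqrt ((1 - ‖fPF x‖ ^ 2) * ‖fderiv ℝ fPF x v‖ ^ 2
        + (inner ℝ (fPF x) (fderiv ℝ fPF x v) : ℝ) ^ 2) / (1 - ‖fPF x‖ ^ 2)
      = 2 * ‖v‖ / (1 - ‖x‖ ^ 2) := by
  have hx1 : ‖x‖ < 1 := hx
  set s : ℝ := ‖x‖ ^ 2 with hs
  have hs0 : 0 ≤ s := by positivity
  have hs1 : s < 1 := by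
    have := hx1
    nlinarith [norm_nonneg x]
  have hps : (0:ℝ) < 1 + s := by linarith
  have hms : (0:ℝ) < 1 - s := by linarith
  have hxx : (inner ℝ x x : ℝ) = s := real_inner_self_eq_norm_sq x
  have hvv : (inner ℝ v v : ℝ) = ‖v‖ ^ 2 := real_inner_self_eq_norm_sq v
  have hDf := fPF_deriv x v
  -- norms squared
  have hF : ‖fPF x‖ ^ 2 = 4 * s / (1 + s) ^ 2 := by
    rw [← real_inner_self_eq_norm_sq]
    simp only [fPF, inner_smul_left, inner_smul_right, RCLike.conj_to_real, ← hs]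
    rw [hxx]; field_simp; ring
  have hU : ‖fderiv ℝ fPF x v‖ ^ 2
      = 4 * (‖v‖^2) / (1 + s) ^ 2 - 16 * (inner ℝ x v : ℝ) ^ 2 / (1 + s) ^ 4 := by
    rw [← real_inner_self_eq_norm_sq, hDf]
    simp only [inner_add_left, inner_add_right, inner_smul_left, inner_smul_right,
      RCLike.conj_to_real, ← hs]
    rw [hxx, hvv, real_inner_comm v x]
    field_simp
    ring
  have hI : (inner ℝ (fPF x) (fderiv ℝ fPF x v) : ℝ)
      = 4 * (inner ℝ x v : ℝ) * (1 - s) / (1 + s) ^ 3 := by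
    rw [hDf]
    simp only [fPF, inner_add_right, inner_smul_left, inner_smul_right,
      RCLike.conj_to_real, ← hs]
    rw [hxx]
    field_simp
    ring
  rw [hF, hU, hI]
  have key : (1 - 4 * s / (1 + s) ^ 2)
        * (4 * ‖v‖ ^ 2 / (1 + s) ^ 2 - 16 * (inner ℝ x v : ℝ) ^ 2 / (1 + s) ^ 4)
      + (4 * (inner ℝ x v : ℝ) * (1 - s) / (1 + s) ^ 3) ^ 2
      = (2 * ‖v‖ * (1 - s) / (1 + s) ^ 2) ^ 2 := by
    field_simp
    ring
  rw [key, Real.sqrt_sq (by positivity)]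
  have h1 : 1 - 4 * s / (1 + s) ^ 2 = (1 - s) ^ 2 / (1 + s) ^ 2 := by
    field_simp; ring
  rw [h1]
  field_simp
end
end
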